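/- Let M ⊆ ℤ[i] be a set such that for every prime element p of ℤ[i], M contains an (n, p)-universal subset. Then M is an n-universal set. -/

import Mathlib

open Polynomial

/-- The fraction field of the Gaussian integers. -/
abbrev FF : Type := FractionRing GaussianInt

/-- The canonical embedding of `ℤ[i]` into its fraction field. -/
noncomputable def ι : GaussianInt →+* FF := algebraMap GaussianInt FF

/-- A polynomial with coefficients in the fraction field of `ℤ[i]` is integer-valued
if it takes values in (the image of) `ℤ[i]` at every Gaussian integer. -/
def IntegerValued (f : FF[X]) : Prop :=
  ∀ z : GaussianInt, f.eval (ι z) ∈ Set.range ι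

/-- A set `M ⊆ ℤ[i]` is `n`-universal if every polynomial of degree at most `n`
with coefficients in the fraction field of `ℤ[i]` taking integer values on `M`
is integer-valued. -/
def IsNUniversal (n : ℕ) (M : Set GaussianInt) : Prop :=
  ∀ f : FF[X], f.natDegree ≤ n → (∀ c ∈ M, f.eval (ι c) ∈ Set.range ι) → IntegerValued f

/-- `M(r mod α)`: the elements of `M` congruent to `r` modulo `α`. -/
def ResidueSet (M : Finset GaussianInt) (α r : GaussianInt) : Set GaussianInt :=
  (M : Set GaussianInt) ∩ {z | α ∣ z - r}

/-- A finite set `M ⊆ ℤ[i]` is almost uniformly distributed modulo `α` if the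
cardinalities of any two residue classes of `M` modulo `α` are equal or differ by one. -/
def AlmostUnifDist (M : Finset GaussianInt) (α : GaussianInt) : Prop :=
  ∀ r s : GaussianInt,
    (ResidueSet M α r).ncard = (ResidueSet M α s).ncard ∨
    (ResidueSet M α r).ncard + 1 = (ResidueSet M α s).ncard ∨
    (ResidueSet M α s).ncard + 1 = (ResidueSet M α r).ncard

/- ### Auxiliary lemmas -/

noncomputable local instance : ∀ a b : GaussianInt, Decidable (a ∣ b) :=
  fun _ _ => Classical.dec _

lemma aux_residue_ncard (C : Finset GaussianInt) (α w : GaussianInt) :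
    (ResidueSet C α w).ncard = (C.filter (fun j => α ∣ w - j)).card := by
  have h : ResidueSet C α w = ↑(C.filter (fun j => α ∣ w - j)) := by
    ext j
    simp only [ResidueSet, Set.mem_inter_iff, Finset.coe_filter, Set.mem_setOf_eq,
      Finset.mem_coe, Finset.mem_filter]
    constructor
    · rintro ⟨hj, hd⟩; exact ⟨hj, (dvd_sub_comm).mp hd⟩
    · rintro ⟨hj, hd⟩; exact ⟨hj, (dvd_sub_comm).mp hd⟩
  rw [h, Set.ncard_coe_finset]

lemma aux_cnt_le {p : GaussianInt} {k : ℕ} {C : Finset GaussianInt} {i : GaussianInt}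
    (hi : i ∈ C) (hud : AlmostUnifDist C (p ^ k)) (z : GaussianInt) :
    ((C.erase i).filter (fun j => p ^ k ∣ i - j)).card ≤
      ((C.erase i).filter (fun j => p ^ k ∣ z - j)).card := by
  set α := p ^ k with hα
  have hFi : i ∈ C.filter (fun j => α ∣ i - j) := by
    simp [Finset.mem_filter, hi]
  have hL : ((C.erase i).filter (fun j => α ∣ i - j)).card
      = (C.filter (fun j => α ∣ i - j)).card - 1 := by
    rw [Finset.filter_erase, Finset.card_erase_of_mem hFi]
  by_cases hzi : α ∣ z - i
  · have hcong : ∀ j ∈ C.erase i, (α ∣ z - j) ↔ (α ∣ i - j) := by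
      intro j _
      constructor
      · intro hd
        have : i - j = (z - j) - (z - i) := by ring
        rw [this]; exact dvd_sub hd hzi
      · intro hd
        have : z - j = (z - i) + (i - j) := by ring
        rw [this]; exact dvd_add hzi hd
    rw [Finset.filter_congr hcong]
  · have hRz : ((C.erase i).filter (fun j => α ∣ z - j)).card
        = (C.filter (fun j => α ∣ z - j)).card := by
      rw [Finset.filter_erase, Finset.erase_eq_of_notMem]
      simp only [Finset.mem_filter]
      exact fun hmem => hzi hmem.2
    have haud := hud i z
    rw [aux_residue_ncard, aux_residue_ncard] at haud
    have h1 : 1 ≤ (C.filter (fun j => α ∣ i - j)).card :=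
      Finset.card_pos.mpr ⟨i, hFi⟩
    rw [hL, hRz]
    omega

lemma aux_mult_count {p x : GaussianInt} (hp : Prime p) (hx : x ≠ 0) {K : ℕ}
    (hK : multiplicity p x ≤ K) :
    multiplicity p x = ∑ k ∈ Finset.Icc 1 K, (if p ^ k ∣ x then 1 else 0) := by
  have hf : FiniteMultiplicity p x :=
    FiniteMultiplicity.of_not_isUnit hp.not_unit hx
  have hfil : (Finset.Icc 1 K).filter (fun k => p ^ k ∣ x)
      = Finset.Icc 1 (multiplicity p x) := by
    ext k
    simp only [Finset.mem_filter, Finset.mem_Icc]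
    rw [hf.pow_dvd_iff_le_multiplicity]
    omega
  rw [← Finset.card_filter, hfil, Nat.card_Icc]
  omega

lemma aux_key {p : GaussianInt} (hp : Prime p) {C : Finset GaussianInt}
    (hud : ∀ k : ℕ, 0 < k → AlmostUnifDist C (p ^ k)) {i : GaussianInt} (hi : i ∈ C)
    (z : GaussianInt) :
    emultiplicity p (∏ j ∈ C.erase i, (i - j)) ≤
      emultiplicity p (∏ j ∈ C.erase i, (z - j)) := by
  set S := C.erase i with hS
  by_cases hPz : ∏ j ∈ S, (z - j) = 0
  · rw [hPz, emultiplicity_zero]; exact le_top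
  have hz : ∀ j ∈ S, z - j ≠ 0 := by
    intro j hj h0
    exact hPz (Finset.prod_eq_zero hj h0)
  have hiS : ∀ j ∈ S, i - j ≠ 0 := by
    intro j hj h0
    exact (Finset.ne_of_mem_erase hj) (sub_eq_zero.mp h0).symm
  have hfin : ∀ x : GaussianInt, x ≠ 0 → FiniteMultiplicity p x :=
    fun x hx => FiniteMultiplicity.of_not_isUnit hp.not_unit hx
  rw [Finset.emultiplicity_prod hp, Finset.emultiplicity_prod hp]
  have hcast : ∀ w : GaussianInt, (∀ j ∈ S, w - j ≠ 0) →
      ∑ j ∈ S, emultiplicity p (w - j)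
        = ((∑ j ∈ S, multiplicity p (w - j) : ℕ) : ℕ∞) := by
    intro w hw
    rw [Nat.cast_sum]
    exact Finset.sum_congr rfl fun j hj => (hfin _ (hw j hj)).emultiplicity_eq_multiplicity
  rw [hcast i hiS, hcast z hz, Nat.cast_le]
  set K := (∑ j ∈ S, multiplicity p (i - j)) + ∑ j ∈ S, multiplicity p (z - j) with hK
  have hb : ∀ w : GaussianInt, (∀ j ∈ S, w - j ≠ 0) →
      (∑ j ∈ S, multiplicity p (w - j)) ≤ K →
      ∑ j ∈ S, multiplicity p (w - j)
        = ∑ k ∈ Finset.Icc 1 K, (S.filter (fun j => p ^ k ∣ w - j)).card := by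
    intro w hw hwK
    rw [Finset.sum_congr rfl (fun j hj => aux_mult_count hp (hw j hj)
      (le_trans (Finset.single_le_sum (f := fun j => multiplicity p (w - j))
        (fun _ _ => Nat.zero_le _) hj) hwK))]
    rw [Finset.sum_comm]
    exact Finset.sum_congr rfl fun k _ => (Finset.card_filter _ _).symm
  rw [hb i hiS (Nat.le_add_right _ _), hb z hz (Nat.le_add_left _ _)]
  refine Finset.sum_le_sum fun k hk => ?_
  have hk1 : 0 < k := by
    simp only [Finset.mem_Icc] at hk; omega
  exact aux_cnt_le hi (hud k hk1) z

lemma aux_prime3 : Prime (3 : GaussianInt) := by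
  haveI : Fact (Nat.Prime 3) := ⟨by norm_num⟩
  have h := (GaussianInt.prime_iff_mod_four_eq_three_of_nat_prime 3).mpr (by norm_num)
  exact_mod_cast h

lemma aux_dvd_of_em_le (b : GaussianInt) : ∀ a : GaussianInt,
    (∀ p : GaussianInt, Prime p → emultiplicity p b ≤ emultiplicity p a) → b ∣ a := by
  induction b using UniqueFactorizationMonoid.induction_on_prime with
  | h₁ =>
    intro a h
    rcases eq_or_ne a 0 with rfl | ha
    · exact dvd_rfl
    · exfalso
      have := h 3 aux_prime3
      rw [emultiplicity_zero] at this
      exact finiteMultiplicity_iff_emultiplicity_ne_top.1 (FiniteMultiplicity.of_not_isUnit aux_prime3.not_unit ha)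
        (top_le_iff.mp this)
  | h₂ x hx => intro a _; exact hx.dvd
  | h₃ b' p hb' hp ih =>
    intro a h
    rcases eq_or_ne a 0 with rfl | ha
    · exact dvd_zero _
    have hself : emultiplicity p p = 1 :=
      (FiniteMultiplicity.of_not_isUnit hp.not_unit hp.ne_zero).emultiplicity_self
    have hpa : p ∣ a := by
      apply dvd_of_emultiplicity_pos
      refine lt_of_lt_of_le ?_ (h p hp)
      rw [emultiplicity_mul hp, hself]
      exact lt_of_lt_of_le zero_lt_one le_self_add
    obtain ⟨a', rfl⟩ := hpa
    refine mul_dvd_mul_left p (ih a' ?_)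
    intro q hq
    have hthis := h q hq
    rw [emultiplicity_mul hq, emultiplicity_mul hq] at hthis
    have hfq : emultiplicity q p ≠ ⊤ :=
      finiteMultiplicity_iff_emultiplicity_ne_top.1 (FiniteMultiplicity.of_not_isUnit hq.not_unit hp.ne_zero)
    exact (WithTop.add_le_add_iff_left hfq).mp hthis

lemma aux_mem_range_of_local (x : FF)
    (h : ∀ p : GaussianInt, Prime p → ∃ D N : GaussianInt, D ≠ 0 ∧
      ι D * x = ι N ∧ emultiplicity p D ≤ emultiplicity p N) :
    x ∈ Set.range ι := by
  obtain ⟨a, b, hb, hx0⟩ := IsFractionRing.div_surjective (A := GaussianInt) x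
  have hx : ι a / ι b = x := hx0
  clear hx0
  have hb0 : b ≠ 0 := nonZeroDivisors.ne_zero hb
  have hinj : Function.Injective ι := IsFractionRing.injective GaussianInt FF
  have hib : (ι b) ≠ 0 := fun h0 => hb0 (hinj (by rw [h0, map_zero]))
  have hxb : x * ι b = ι a := by
    rw [← hx, div_mul_cancel₀ _ hib]
  have hba : b ∣ a := by
    apply aux_dvd_of_em_le
    intro p hp
    obtain ⟨D, N, hD, hDx, hDN⟩ := h p hp
    have hDa : D * a = N * b := by
      apply hinj
      rw [map_mul, map_mul, ← hxb, ← hDx]; ring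
    have e1 : emultiplicity p D + emultiplicity p a
        = emultiplicity p N + emultiplicity p b := by
      rw [← emultiplicity_mul hp, ← emultiplicity_mul hp, hDa]
    have hDfin : emultiplicity p D ≠ ⊤ :=
      finiteMultiplicity_iff_emultiplicity_ne_top.1 (FiniteMultiplicity.of_not_isUnit hp.not_unit hD)
    have h2 : emultiplicity p D + emultiplicity p b
        ≤ emultiplicity p D + emultiplicity p a := by
      rw [e1]; exact add_le_add_left hDN _
    exact (WithTop.add_le_add_iff_left hDfin).mp h2
  obtain ⟨c, rfl⟩ := hba
  refine ⟨c, ?_⟩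
  rw [← hx, map_mul, mul_comm, mul_div_assoc, div_self hib, mul_one]

/-- If `M ⊆ ℤ[i]` contains, for every prime `p` of `ℤ[i]`, an `(n, p)`-universal
subset (a subset of cardinality `n + 1` almost uniformly distributed modulo every
power of `p`), then `M` is `n`-universal. -/
theorem universal_of_np_universal_subsets (n : ℕ) (M : Set GaussianInt)
    (h : ∀ p : GaussianInt, Prime p → ∃ C : Finset GaussianInt,
      (C : Set GaussianInt) ⊆ M ∧ C.card = n + 1 ∧
        ∀ k : ℕ, 0 < k → AlmostUnifDist C (p ^ k)) :
    IsNUniversal n M := by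
  intro f hdeg hvals z
  apply aux_mem_range_of_local
  intro p hp
  obtain ⟨C, hCM, hcard, hud⟩ := h p hp
  have hinj : Function.Injective ι := IsFractionRing.injective GaussianInt FF
  have hvC : Set.InjOn ι (C : Set GaussianInt) := fun x _ y _ hxy => hinj hxy
  have hdeglt : f.degree < (C.card : WithBot ℕ) := by
    rw [hcard]
    calc f.degree ≤ (f.natDegree : WithBot ℕ) := Polynomial.degree_le_natDegree
      _ ≤ (n : WithBot ℕ) := by exact_mod_cast hdeg
      _ < ((n + 1 : ℕ) : WithBot ℕ) := by exact_mod_cast Nat.lt_succ_self n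
  have hf := Lagrange.eq_interpolate (v := ι) hvC hdeglt
  have hv : ∀ i ∈ C, ∃ w : GaussianInt, f.eval (ι i) = ι w := by
    intro i hiC
    obtain ⟨w, hw⟩ := hvals i (hCM hiC)
    exact ⟨w, hw.symm⟩
  choose a0 ha0 using hv
  set a : GaussianInt → GaussianInt :=
    fun i => if hiC : i ∈ C then a0 i hiC else 0 with haa
  have ha : ∀ i ∈ C, f.eval (ι i) = ι (a i) := by
    intro i hiC
    rw [haa]; simp only [hiC, dif_pos]
    exact ha0 i hiC
  set d : GaussianInt → GaussianInt := fun i => ∏ j ∈ C.erase i, (i - j) with hdd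
  set P : GaussianInt → GaussianInt := fun i => ∏ j ∈ C.erase i, (z - j) with hPP
  set E : GaussianInt → GaussianInt := fun i => ∏ i' ∈ C.erase i, d i' with hEE
  set D : GaussianInt := ∏ i ∈ C, d i with hDD
  have hd0 : ∀ i ∈ C, d i ≠ 0 := by
    intro i hiC
    rw [hdd]
    rw [Finset.prod_ne_zero_iff]
    intro j hj h0
    exact (Finset.ne_of_mem_erase hj) (sub_eq_zero.mp h0).symm
  have hD0 : D ≠ 0 := by
    rw [hDD, Finset.prod_ne_zero_iff]
    exact hd0
  have hιd : ∀ i, ι (d i) = ∏ j ∈ C.erase i, (ι i - ι j) := by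
    intro i
    rw [hdd, map_prod]
    exact Finset.prod_congr rfl fun j _ => map_sub ι i j
  have hιP : ∀ i, ι (P i) = ∏ j ∈ C.erase i, (ι z - ι j) := by
    intro i
    rw [hPP, map_prod]
    exact Finset.prod_congr rfl fun j _ => map_sub ι z j
  have hιd0 : ∀ i ∈ C, ι (d i) ≠ 0 := by
    intro i hiC h0
    exact hd0 i hiC (hinj (by rw [h0, map_zero]))
  have hbasis : ∀ i ∈ C, (Lagrange.basis C ι i).eval (ι z)
      = ι (P i) * (ι (d i))⁻¹ := by
    intro i hiC
    rw [Lagrange.basis, Polynomial.eval_prod]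
    have hfac : ∀ j ∈ C.erase i,
        (Lagrange.basisDivisor (ι i) (ι j)).eval (ι z)
          = (ι i - ι j)⁻¹ * (ι z - ι j) := by
      intro j _
      simp [Lagrange.basisDivisor]
    rw [Finset.prod_congr rfl hfac, Finset.prod_mul_distrib, Finset.prod_inv_distrib,
      ← hιd, ← hιP, mul_comm]
  have heval : f.eval (ι z) = ∑ i ∈ C, ι (a i) * (ι (P i) * (ι (d i))⁻¹) := by
    conv_lhs => rw [hf]
    rw [Lagrange.interpolate_apply, Polynomial.eval_finset_sum]
    refine Finset.sum_congr rfl fun i hiC => ?_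
    rw [Polynomial.eval_mul, Polynomial.eval_C, hbasis i hiC, ha i hiC]
  set N : GaussianInt := ∑ i ∈ C, a i * E i * P i with hNN
  refine ⟨D, N, hD0, ?_, ?_⟩
  · rw [heval, Finset.mul_sum, hNN, map_sum]
    refine Finset.sum_congr rfl fun i hiC => ?_
    have hDi : D = d i * E i := by
      rw [hDD, hEE, Finset.mul_prod_erase C d hiC]
    rw [hDi, map_mul ι (a i * E i) (P i), map_mul ι (a i) (E i), map_mul ι (d i) (E i)]
    have h1 : (ι (d i))⁻¹ * ι (d i) = 1 := inv_mul_cancel₀ (hιd0 i hiC)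
    calc ι (d i) * ι (E i) * (ι (a i) * (ι (P i) * (ι (d i))⁻¹))
        = ((ι (d i))⁻¹ * ι (d i)) * (ι (a i) * ι (E i) * ι (P i)) := by ring
      _ = ι (a i) * ι (E i) * ι (P i) := by rw [h1, one_mul]
  · have hterm : ∀ i ∈ C, emultiplicity p D ≤ emultiplicity p (a i * E i * P i) := by
      intro i hiC
      have hDi : D = d i * E i := by
        rw [hDD, hEE, Finset.mul_prod_erase C d hiC]
      rw [hDi, emultiplicity_mul hp, emultiplicity_mul hp, emultiplicity_mul hp]
      have hk := aux_key hp hud hiC z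
      have hk' : emultiplicity p (d i) ≤ emultiplicity p (P i) := hk
      calc emultiplicity p (d i) + emultiplicity p (E i)
          ≤ emultiplicity p (P i) + emultiplicity p (E i) := add_le_add_left hk' _
        _ ≤ emultiplicity p (a i) + emultiplicity p (E i) + emultiplicity p (P i) := by
            rw [add_comm (emultiplicity p (P i)) (emultiplicity p (E i))]
            exact add_le_add_left le_add_self _
    have hfinD : FiniteMultiplicity p D :=
      FiniteMultiplicity.of_not_isUnit hp.not_unit hD0
    set m : ℕ := multiplicity p D with hm
    have hemD : emultiplicity p D = (m : ℕ∞) := hfinD.emultiplicity_eq_multiplicity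
    have hdvdN : p ^ m ∣ N := by
      rw [hNN]
      refine Finset.dvd_sum fun i hiC => ?_
      rw [pow_dvd_iff_le_emultiplicity]
      exact le_trans (le_of_eq hemD.symm) (hterm i hiC)
    rw [hemD]
    exact pow_dvd_iff_le_emultiplicity.mp hdvdN
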